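/- arXiv:2212.10195 — 2 statements merged into one kernel-verified Lean document; each statement's English description precedes it below -/
import Mathlib

section
/- Let A ∈ ℍ^{n×n}, q a right eigenvalue, and λ_q the unique complex number with nonnegative imaginary part similar to q. Then the algebraic multiplicity a.m.(q,A), defined as the number of occurrences of λ_q on the diagonal of any Schur triangularization T = U*AU, is well-defined (independent of the choice of U and T), and equals a.m.(λ_q, f(A)) if Im(λ_q) > 0, and equals (1/2)·a.m.(λ_q, f(A)) if λ_q is real. -/
open Quaternion Matrix

noncomputable section

/-- The copy of a complex number inside the quaternions (span of 1 and i). -/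
def toQ (z : ℂ) : ℍ[ℝ] := ⟨z.re, z.im, 0, 0⟩

/-- First complex component of a quaternion: a = c1 a + (c2 a)·j. -/
def c1 (a : ℍ[ℝ]) : ℂ := ⟨a.re, a.imI⟩
/-- Second complex component of a quaternion. -/
def c2 (a : ℍ[ℝ]) : ℂ := ⟨a.imJ, a.imK⟩

/-- Similarity of quaternions: p = h⁻¹ q h for some nonzero h. -/
def qSimilar (p q : ℍ[ℝ]) : Prop := ∃ h : ℍ[ℝ], h ≠ 0 ∧ p = h⁻¹ * q * h

/-- q is a right eigenvalue of A. -/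
def RightEig {n : ℕ} (A : Matrix (Fin n) (Fin n) ℍ[ℝ]) (q : ℍ[ℝ]) : Prop :=
  ∃ x : Fin n → ℍ[ℝ], x ≠ 0 ∧ A.mulVec x = fun i => x i * q

/-- The complex adjoint matrix of a quaternion matrix. -/
def fAdj {n : ℕ} (A : Matrix (Fin n) (Fin n) ℍ[ℝ]) :
    Matrix (Fin n ⊕ Fin n) (Fin n ⊕ Fin n) ℂ :=
  Matrix.fromBlocks (A.map c1) (A.map c2)
    (-(A.map (fun a => starRingEnd ℂ (c2 a)))) (A.map (fun a => starRingEnd ℂ (c1 a)))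

/-- Algebraic multiplicity of an eigenvalue of a complex matrix. -/
def algMult {m : Type*} [Fintype m] [DecidableEq m] (B : Matrix m m ℂ) (μ : ℂ) : ℕ :=
  (Matrix.charpoly B).rootMultiplicity μ

/-- Geometric multiplicity of an eigenvalue of a complex matrix. -/
def geoMult {m : Type*} [Fintype m] [DecidableEq m] (B : Matrix m m ℂ) (μ : ℂ) : ℕ :=
  Module.finrank ℂ (LinearMap.ker (Matrix.mulVecLin (B - μ • 1)))

/-- The set of right q-eigenvectors (with 0). -/
def eigSet {n : ℕ} (A : Matrix (Fin n) (Fin n) ℍ[ℝ]) (q : ℍ[ℝ]) : Set (Fin n → ℍ[ℝ]) :=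
  {x | A.mulVec x = fun i => x i * q}


/-- The [q]-eigenspace as a right ℍ-subspace of ℍⁿ. -/
def Vclass {n : ℕ} (A : Matrix (Fin n) (Fin n) ℍ[ℝ]) (q : ℍ[ℝ]) :
    Submodule ℍ[ℝ]ᵐᵒᵖ (Fin n → ℍ[ℝ]) :=
  Submodule.span ℍ[ℝ]ᵐᵒᵖ (⋃ q' ∈ {p | qSimilar p q}, eigSet A q')

/-- geometric multiplicity -/
def gm {n : ℕ} (A : Matrix (Fin n) (Fin n) ℍ[ℝ]) (q : ℍ[ℝ]) : ℕ :=
  Module.finrank ℍ[ℝ]ᵐᵒᵖ (Vclass A q)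


lemma c1_add (a b : ℍ[ℝ]) : c1 (a+b) = c1 a + c1 b := by
  simp [c1, Complex.ext_iff]
lemma c2_add (a b : ℍ[ℝ]) : c2 (a+b) = c2 a + c2 b := by
  simp [c2, Complex.ext_iff]
lemma c1_zero : c1 0 = 0 := by simp [c1, Complex.ext_iff]
lemma c2_zero : c2 0 = 0 := by simp [c2, Complex.ext_iff]

lemma c1_mul (a b : ℍ[ℝ]) :
    c1 (a*b) = c1 a * c1 b - c2 a * starRingEnd ℂ (c2 b) := by
  simp [c1, c2, Complex.ext_iff, Quaternion.re_mul, Quaternion.imI_mul]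
  constructor <;> ring

lemma c2_mul (a b : ℍ[ℝ]) :
    c2 (a*b) = c1 a * c2 b + c2 a * starRingEnd ℂ (c1 b) := by
  simp [c1, c2, Complex.ext_iff, Quaternion.imJ_mul, Quaternion.imK_mul]
  constructor <;> ring

def c1Hom : ℍ[ℝ] →+ ℂ := { toFun := c1, map_zero' := c1_zero, map_add' := c1_add }
def c2Hom : ℍ[ℝ] →+ ℂ := { toFun := c2, map_zero' := c2_zero, map_add' := c2_add }

lemma c1_sum {ι : Type*} (s : Finset ι) (f : ι → ℍ[ℝ]) :
    c1 (∑ x ∈ s, f x) = ∑ x ∈ s, c1 (f x) := map_sum c1Hom f s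
lemma c2_sum {ι : Type*} (s : Finset ι) (f : ι → ℍ[ℝ]) :
    c2 (∑ x ∈ s, f x) = ∑ x ∈ s, c2 (f x) := map_sum c2Hom f s

lemma fAdj_one {n : ℕ} : fAdj (1 : Matrix (Fin n) (Fin n) ℍ[ℝ]) = 1 := by
  ext a b
  rcases a with i | i <;> rcases b with j | j <;>
    simp [fAdj, Matrix.one_apply, apply_ite] <;>
    split_ifs <;> simp [c1, c2, Complex.ext_iff]

lemma fAdj_mul {n : ℕ} (A B : Matrix (Fin n) (Fin n) ℍ[ℝ]) :
    fAdj (A*B) = fAdj A * fAdj B := by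
  ext a b
  rcases a with i | i <;> rcases b with j | j <;>
    simp only [fAdj, Matrix.mul_apply, Fintype.sum_sum_type, fromBlocks_apply₁₁,
      fromBlocks_apply₁₂, fromBlocks_apply₂₁, fromBlocks_apply₂₂, Matrix.map_apply,
      Matrix.neg_apply, c1_sum, c2_sum, map_sum]
  case inl.inl =>
    rw [← Finset.sum_add_distrib]
    exact Finset.sum_congr rfl fun k _ => by rw [c1_mul]; ring
  case inl.inr =>
    rw [← Finset.sum_add_distrib]
    exact Finset.sum_congr rfl fun k _ => by rw [c2_mul]
  case inr.inl =>
    rw [← Finset.sum_neg_distrib, ← Finset.sum_add_distrib]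
    exact Finset.sum_congr rfl fun k _ => by
      rw [c2_mul]; simp only [map_add, _root_.map_mul, Complex.conj_conj]; ring
  case inr.inr =>
    rw [← Finset.sum_add_distrib]
    exact Finset.sum_congr rfl fun k _ => by
      rw [c1_mul]; simp only [map_sub, _root_.map_mul, Complex.conj_conj]; ring

lemma charpoly_conj_eq {m : Type*} [Fintype m] [DecidableEq m] (P Q M : Matrix m m ℂ)
    (h1 : P*Q = 1) (h2 : Q*P = 1) : (P * M * Q).charpoly = M.charpoly := by
  have hcm : charmatrix (P * M * Q) =
      P.map Polynomial.C * charmatrix M * Q.map Polynomial.C := by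
    unfold charmatrix
    simp only [RingHom.mapMatrix_apply]
    rw [Matrix.mul_sub, Matrix.sub_mul]
    congr 1
    · rw [mul_assoc, (Matrix.scalar_commute (Polynomial.X : Polynomial ℂ)
        (fun r => Commute.all _ _) (Q.map Polynomial.C)).eq, ← mul_assoc, ← Matrix.map_mul, h1,
        Matrix.map_one _ (map_zero _) (map_one _), one_mul]
    · rw [← Matrix.map_mul, ← Matrix.map_mul]
  rw [Matrix.charpoly, Matrix.charpoly, hcm, det_mul, det_mul]
  have : (P.map Polynomial.C).det * (Q.map Polynomial.C).det = 1 := by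
    rw [← det_mul, ← Matrix.map_mul, h1, Matrix.map_one _ (map_zero _) (map_one _), det_one]
  calc (P.map Polynomial.C).det * (charmatrix M).det * (Q.map Polynomial.C).det
      = (charmatrix M).det * ((P.map Polynomial.C).det * (Q.map Polynomial.C).det) := by ring
    _ = (charmatrix M).det := by rw [this, mul_one]

lemma fAdj_charpoly_triangular {n : ℕ} (T : Matrix (Fin n) (Fin n) ℍ[ℝ])
    (htri : ∀ i j : Fin n, j < i → T i j = 0) (hd : ∀ i, c2 (T i i) = 0) :
    (fAdj T).charpoly =
      ∏ i, ((Polynomial.X - Polynomial.C (c1 (T i i))) *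
        (Polynomial.X - Polynomial.C (starRingEnd ℂ (c1 (T i i))))) := by
  classical
  set b' : Fin n ⊕ Fin n → ℕ := Sum.elim (fun i => 2*(i:ℕ)) (fun i => 2*(i:ℕ)+1) with hb'
  have hinj : Function.Injective b' := by
    rintro (x|x) (y|y) h <;> simp only [b', Sum.elim_inl, Sum.elim_inr] at h <;>
      simp only [Sum.inl.injEq, Sum.inr.injEq, Fin.ext_iff, reduceCtorEq] <;> omega
  have hBT : (fAdj T).BlockTriangular b' := by
    intro a c h'
    rcases a with i|i <;> rcases c with j|j <;>
      simp only [b', Sum.elim_inl, Sum.elim_inr] at h' <;>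
      simp only [fAdj, fromBlocks_apply₁₁, fromBlocks_apply₁₂, fromBlocks_apply₂₁,
        fromBlocks_apply₂₂, Matrix.map_apply, Matrix.neg_apply]
    · rw [htri i j (by rw [Fin.lt_def]; omega)]; exact c1_zero
    · rw [htri i j (by rw [Fin.lt_def]; omega)]; exact c2_zero
    · rcases eq_or_ne j i with rfl | hne
      · simp [hd j]
      · have hji : j < i := by
          rw [Fin.lt_def]
          rcases Nat.lt_or_ge (j : ℕ) (i : ℕ) with hh | hh
          · exact hh
          · exact absurd (Fin.ext (by omega)) hne
        rw [htri i j hji, c2_zero]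
        simp
    · rw [htri i j (by rw [Fin.lt_def]; omega), c1_zero]; simp
  have hfac : ∀ a : Fin n ⊕ Fin n,
      ((fAdj T).toSquareBlock b' (b' a)).charpoly
        = Polynomial.X - Polynomial.C (fAdj T a a) := by
    intro a
    letI : Unique {x : Fin n ⊕ Fin n // b' x = b' a} :=
      ⟨⟨⟨a, rfl⟩⟩, fun x => Subtype.ext (hinj x.2)⟩
    rw [Matrix.charpoly, Matrix.det_unique, charmatrix_apply_eq]
    congr 2
  have h1 := hBT.charpoly
  rw [Finset.prod_image (fun x _ y _ h => hinj h)] at h1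
  rw [h1]
  have h2 : ∀ a : Fin n ⊕ Fin n, ((fAdj T).toSquareBlock b' (b' a)).charpoly =
      Polynomial.X - Polynomial.C (fAdj T a a) := hfac
  rw [Finset.prod_congr rfl fun a _ => h2 a, Fintype.prod_sum_type, ← Finset.prod_mul_distrib]
  exact Finset.prod_congr rfl fun i _ => by simp [fAdj]

lemma toQ_inj : Function.Injective toQ := fun x y h =>
  Complex.ext (congrArg QuaternionAlgebra.re h) (congrArg QuaternionAlgebra.imI h)


/-- The algebraic multiplicity (number of occurrences of λ_q on the diagonal of any
Schur triangularization) is well-defined and equals a.m.(λ_q, f(A)) when Im λ_q > 0,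
and half of it when λ_q is real. -/
theorem algMult_well_defined {n : ℕ} (A : Matrix (Fin n) (Fin n) ℍ[ℝ])
    (q : ℍ[ℝ]) (hq : RightEig A q) (lq : ℂ) (him : 0 ≤ lq.im)
    (hsim : qSimilar q (toQ lq)) :
    ∀ U T : Matrix (Fin n) (Fin n) ℍ[ℝ],
      Uᴴ * U = 1 → U * Uᴴ = 1 → T = Uᴴ * A * U →
      (∀ i j : Fin n, j < i → T i j = 0) →
      (∀ i : Fin n, ∃ μ : ℂ, 0 ≤ μ.im ∧ T i i = toQ μ) →
      (0 < lq.im → Set.ncard {i : Fin n | T i i = toQ lq} = algMult (fAdj A) lq) ∧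
      (lq.im = 0 → 2 * Set.ncard {i : Fin n | T i i = toQ lq} = algMult (fAdj A) lq) := by
  intro U T hUl hUr hT htri hdiag
  classical
  choose μ hμim hμ using hdiag
  have hA : A = U * T * Uᴴ := by
    calc A = (U*Uᴴ)*A*(U*Uᴴ) := by rw [hUr, Matrix.one_mul, Matrix.mul_one]
    _ = U*(Uᴴ*A*U)*Uᴴ := by simp only [Matrix.mul_assoc]
    _ = U*T*Uᴴ := by rw [hT]
  have hchA : (fAdj A).charpoly = (fAdj T).charpoly := by
    rw [hA, fAdj_mul, fAdj_mul]
    exact charpoly_conj_eq (fAdj U) (fAdj Uᴴ) (fAdj T)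
      (by rw [← fAdj_mul, hUr, fAdj_one]) (by rw [← fAdj_mul, hUl, fAdj_one])
  have hc1 : ∀ i, c1 (T i i) = μ i := fun i => by rw [hμ i]; rfl
  have hc2 : ∀ i, c2 (T i i) = 0 := fun i => by
    rw [hμ i]; simp [c2, toQ, Complex.ext_iff]
  have hchar' : (fAdj A).charpoly
      = ∏ i, ((Polynomial.X - Polynomial.C (μ i)) *
          (Polynomial.X - Polynomial.C (starRingEnd ℂ (μ i)))) := by
    rw [hchA, fAdj_charpoly_triangular T htri hc2]
    exact Finset.prod_congr rfl fun i _ => by rw [hc1 i]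
  have hroots : (fAdj A).charpoly.roots
      = (Finset.univ.val.map μ) + (Finset.univ.val.map (fun i => starRingEnd ℂ (μ i))) := by
    have heq : (fAdj A).charpoly =
        (((Finset.univ.val.map μ) + (Finset.univ.val.map (fun i => starRingEnd ℂ (μ i)))).map
          (fun a => Polynomial.X - Polynomial.C a)).prod := by
      rw [hchar', Multiset.map_add, Multiset.prod_add, Finset.prod_mul_distrib]
      congr 1
      · rw [Multiset.map_map]; rfl
      · rw [Multiset.map_map]; rfl
    rw [heq, Polynomial.roots_multiset_prod_X_sub_C]
  have halg : algMult (fAdj A) lq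
      = Multiset.count lq (Finset.univ.val.map μ)
        + Multiset.count lq (Finset.univ.val.map (fun i => starRingEnd ℂ (μ i))) := by
    rw [algMult, ← Polynomial.count_roots, hroots, Multiset.count_add]
  have hcnt1 : Multiset.count lq (Finset.univ.val.map μ)
      = (Finset.univ.filter (fun i => lq = μ i)).card := by
    rw [Multiset.count_map]; rfl
  have hcnt2 : Multiset.count lq (Finset.univ.val.map (fun i => starRingEnd ℂ (μ i)))
      = (Finset.univ.filter (fun i => lq = starRingEnd ℂ (μ i))).card := by
    rw [Multiset.count_map]; rfl
  have hset : {i : Fin n | T i i = toQ lq} = ↑(Finset.univ.filter (fun i => lq = μ i)) := by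
    ext i
    simp only [Set.mem_setOf_eq, Finset.coe_filter, Finset.mem_univ, true_and, hμ i]
    constructor
    · intro h; exact (toQ_inj h).symm
    · intro h; rw [← h]
  constructor
  · intro hpos
    rw [hset, Set.ncard_coe_finset, halg, hcnt1, hcnt2]
    have hemp : (Finset.univ.filter (fun i => lq = starRingEnd ℂ (μ i))) = ∅ := by
      rw [Finset.filter_eq_empty_iff]
      intro i _ h
      have h1 : lq.im = -(μ i).im := by rw [h, Complex.conj_im]
      have h2 := hμim i
      linarith
    rw [hemp, Finset.card_empty, add_zero]
  · intro h0
    have hcongr : (Finset.univ.filter (fun i => lq = starRingEnd ℂ (μ i)))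
        = (Finset.univ.filter (fun i => lq = μ i)) := by
      apply Finset.filter_congr
      intro i _
      constructor
      · intro h
        have h1 : starRingEnd ℂ lq = μ i := by rw [h, Complex.conj_conj]
        rw [← h1, Complex.conj_eq_iff_im.2 h0]
      · intro h
        rw [← h, Complex.conj_eq_iff_im.2 h0]
    rw [hset, Set.ncard_coe_finset, halg, hcnt1, hcnt2, hcongr]
    omega
end
end

section
/- If A ∈ ℍ^{n×n} is normal (AA* = A*A), then for every right eigenvalue q of A, the algebraic and geometric multiplicities of q coincide: a.m.(q,A) = g.m.(q,A). -/
open Quaternion Matrix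

noncomputable section

-- ## Auxiliary lemmas

lemma qSimilar_symm {p q : ℍ[ℝ]} (h : qSimilar p q) : qSimilar q p := by
  obtain ⟨h, h0, he⟩ := h
  refine ⟨h⁻¹, inv_ne_zero h0, ?_⟩
  rw [he, inv_inv, show h * (h⁻¹ * q * h) * h⁻¹ = (h * h⁻¹) * q * (h * h⁻¹) by
    simp only [mul_assoc], mul_inv_cancel₀ h0]
  simp

lemma qSimilar_trans {p q r : ℍ[ℝ]} (h1 : qSimilar p q) (h2 : qSimilar q r) : qSimilar p r := by
  obtain ⟨h, h0, he⟩ := h1; obtain ⟨k, k0, ke⟩ := h2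
  refine ⟨k * h, mul_ne_zero k0 h0, ?_⟩
  rw [he, ke, _root_.mul_inv_rev]
  simp only [mul_assoc]

lemma re_qSimilar {p q : ℍ[ℝ]} (h : qSimilar p q) : p.re = q.re := by
  obtain ⟨h, h0, he⟩ := h
  have : (h⁻¹ * q * h).re = (h * (h⁻¹ * q)).re := by
    simp [Quaternion.re_mul]; ring
  rw [he, this, ← mul_assoc, mul_inv_cancel₀ h0, one_mul]

lemma normSq_qSimilar {p q : ℍ[ℝ]} (h : qSimilar p q) : normSq p = normSq q := by
  obtain ⟨h, h0, he⟩ := h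
  rw [he, _root_.map_mul, _root_.map_mul, map_inv₀]
  have : normSq h ≠ 0 := by simpa using h0
  field_simp

lemma toQ_eq_of_qSimilar {μ l : ℂ} (hm : 0 ≤ μ.im) (hl : 0 ≤ l.im)
    (h : qSimilar (toQ μ) (toQ l)) : μ = l := by
  have h1 : μ.re = l.re := re_qSimilar h
  have h2 : normSq (toQ μ) = normSq (toQ l) := normSq_qSimilar h
  rw [Quaternion.normSq_def', Quaternion.normSq_def'] at h2
  simp [toQ] at h2
  have h3 : μ.im^2 = l.im^2 := by rw [h1] at h2; linarith
  have : μ.im = l.im := by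
    rw [← Real.sqrt_sq hm, ← Real.sqrt_sq hl, h3]
  exact Complex.ext h1 this

lemma coe_q_inj {a b : ℝ} (h : (a:ℍ[ℝ]) = b) : a = b := by
  have := congrArg QuaternionAlgebra.re h; simpa using this

lemma coe_q_sum {ι : Type*} (s : Finset ι) (f : ι → ℝ) :
    ((∑ x ∈ s, f x : ℝ) : ℍ[ℝ]) = ∑ x ∈ s, ((f x : ℝ) : ℍ[ℝ]) :=
  map_sum (algebraMap ℝ ℍ[ℝ]) f s

lemma tri_normal_diag {n : ℕ} (T : Matrix (Fin n) (Fin n) ℍ[ℝ])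
    (hnorm : T * Tᴴ = Tᴴ * T) (htri : ∀ i j : Fin n, j < i → T i j = 0) :
    ∀ i j : Fin n, i ≠ j → T i j = 0 := by
  have key : ∀ m : ℕ, ∀ i j : Fin n, i.val = m → i ≠ j → T i j = 0 := by
    intro m
    induction m using Nat.strong_induction_on with
    | _ m IH =>
      intro i j him hij
      rcases lt_trichotomy j i with hlt | heq | hgt
      · exact htri i j hlt
      · exact absurd heq.symm hij
      have hrow : ∀ k : Fin n, k < i → ∀ j' : Fin n, k ≠ j' → T k j' = 0 := by
        intro k hk j' hk'
        exact IH k.val (him ▸ hk) k j' rfl hk'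
      have e1 : (T * Tᴴ) i i = ((∑ k, normSq (T i k) : ℝ) : ℍ[ℝ]) := by
        rw [Matrix.mul_apply, coe_q_sum]
        refine Finset.sum_congr rfl fun k _ => ?_
        rw [Matrix.conjTranspose_apply, Quaternion.self_mul_star]
      have e2 : (Tᴴ * T) i i = ((∑ k, normSq (T k i) : ℝ) : ℍ[ℝ]) := by
        rw [Matrix.mul_apply, coe_q_sum]
        refine Finset.sum_congr rfl fun k _ => ?_
        rw [Matrix.conjTranspose_apply, Quaternion.star_mul_self]
      have hre : (∑ k, normSq (T i k)) = (∑ k, normSq (T k i)) := by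
        have := congrArg (fun M : Matrix (Fin n) (Fin n) ℍ[ℝ] => M i i) hnorm
        rw [e1, e2] at this
        exact coe_q_inj this
      have hrhs : (∑ k, normSq (T k i)) = normSq (T i i) := by
        refine Finset.sum_eq_single i (fun k _ hk => ?_) (by simp)
        rcases lt_trichotomy k i with h | h | h
        · rw [hrow k h i hk]; simp
        · exact absurd h hk
        · rw [htri k i h]; simp
      have hlhs : (∑ k, normSq (T i k))
          = normSq (T i i) + ∑ k ∈ Finset.univ.erase i, normSq (T i k) :=
        (Finset.add_sum_erase _ _ (Finset.mem_univ i)).symm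
      have hz : ∑ k ∈ Finset.univ.erase i, normSq (T i k) = 0 := by
        rw [hlhs, hrhs] at hre; linarith
      have := (Finset.sum_eq_zero_iff_of_nonneg (fun k _ => Quaternion.normSq_nonneg)).mp hz j
        (Finset.mem_erase.mpr ⟨fun h => hij h.symm, Finset.mem_univ j⟩)
      exact Quaternion.normSq_eq_zero.mp this
  intro i j h; exact key i.val i j rfl h

lemma op_smul_apply (c : ℍ[ℝ]ᵐᵒᵖ) (a : ℍ[ℝ]) : c • a = a * c.unop := rfl

lemma mulVec_op_smul {n : ℕ} (U : Matrix (Fin n) (Fin n) ℍ[ℝ]) (c : ℍ[ℝ]ᵐᵒᵖ)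
    (x : Fin n → ℍ[ℝ]) : U.mulVec (c • x) = c • U.mulVec x := by
  funext i
  simp only [Matrix.mulVec, dotProduct, Pi.smul_apply, op_smul_apply,
    Finset.sum_mul, mul_assoc]

/-- mulVec as a right-ℍ-linear map. -/
def mulVecOp {n : ℕ} (U : Matrix (Fin n) (Fin n) ℍ[ℝ]) :
    (Fin n → ℍ[ℝ]) →ₗ[ℍ[ℝ]ᵐᵒᵖ] (Fin n → ℍ[ℝ]) where
  toFun x := U.mulVec x
  map_add' x y := Matrix.mulVec_add U x y
  map_smul' c x := mulVec_op_smul U c x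

/-- mulVec by a unitary as a linear equivalence. -/
def mulVecOpEquiv {n : ℕ} (U : Matrix (Fin n) (Fin n) ℍ[ℝ])
    (h1 : Uᴴ * U = 1) (h2 : U * Uᴴ = 1) :
    (Fin n → ℍ[ℝ]) ≃ₗ[ℍ[ℝ]ᵐᵒᵖ] (Fin n → ℍ[ℝ]) :=
  LinearEquiv.ofLinear (mulVecOp U) (mulVecOp Uᴴ)
    (LinearMap.ext fun x => by
      show U.mulVec (Uᴴ.mulVec x) = x
      rw [Matrix.mulVec_mulVec, h2, Matrix.one_mulVec])
    (LinearMap.ext fun x => by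
      show Uᴴ.mulVec (U.mulVec x) = x
      rw [Matrix.mulVec_mulVec, h1, Matrix.one_mulVec])

lemma mulVecOpEquiv_apply {n : ℕ} (U : Matrix (Fin n) (Fin n) ℍ[ℝ])
    (h1 : Uᴴ * U = 1) (h2 : U * Uᴴ = 1) (x : Fin n → ℍ[ℝ]) :
    mulVecOpEquiv U h1 h2 x = U.mulVec x := rfl

lemma image_eigSet {n : ℕ} (A U : Matrix (Fin n) (Fin n) ℍ[ℝ])
    (h1 : Uᴴ * U = 1) (h2 : U * Uᴴ = 1) (q' : ℍ[ℝ]) :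
    (mulVecOpEquiv U h1 h2) '' (eigSet (Uᴴ * A * U) q') = eigSet A q' := by
  ext y
  simp only [eigSet, Set.mem_image, Set.mem_setOf_eq]
  constructor
  · rintro ⟨x, hx, rfl⟩
    rw [mulVecOpEquiv_apply]
    have e : A.mulVec (U.mulVec x) = U.mulVec ((Uᴴ * A * U).mulVec x) := by
      rw [Matrix.mulVec_mulVec, Matrix.mulVec_mulVec, ← Matrix.mul_assoc,
        ← Matrix.mul_assoc, h2, Matrix.one_mul]
    rw [e, hx, show (fun i => x i * q') = (MulOpposite.op q') • x from rfl,
      mulVec_op_smul]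
    rfl
  · intro hy
    refine ⟨Uᴴ.mulVec y, ?_, ?_⟩
    · have e : (Uᴴ * A * U).mulVec (Uᴴ.mulVec y) = Uᴴ.mulVec (A.mulVec y) := by
        rw [Matrix.mulVec_mulVec, Matrix.mulVec_mulVec, Matrix.mul_assoc (Uᴴ * A) U Uᴴ, h2,
          Matrix.mul_one]
      rw [e, hy, show (fun i => y i * q') = (MulOpposite.op q') • y from rfl,
        mulVec_op_smul]
      rfl
    · rw [mulVecOpEquiv_apply, Matrix.mulVec_mulVec, h2, Matrix.one_mulVec]

lemma gm_transfer {n : ℕ} (A U : Matrix (Fin n) (Fin n) ℍ[ℝ])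
    (h1 : Uᴴ * U = 1) (h2 : U * Uᴴ = 1) (q : ℍ[ℝ]) :
    gm A q = gm (Uᴴ * A * U) q := by
  unfold gm Vclass
  rw [show (⋃ q' ∈ {p | qSimilar p q}, eigSet A q')
      = (mulVecOpEquiv U h1 h2) '' (⋃ q' ∈ {p | qSimilar p q}, eigSet (Uᴴ * A * U) q') by
    rw [Set.image_iUnion₂]
    exact (Set.iUnion₂_congr fun q' _ => (image_eigSet A U h1 h2 q').symm)]
  rw [Submodule.span_image_linearEquiv]
  exact LinearEquiv.finrank_map_eq (mulVecOpEquiv U h1 h2) _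

lemma gm_diag {n : ℕ} (T : Matrix (Fin n) (Fin n) ℍ[ℝ])
    (hdiag : ∀ i j : Fin n, i ≠ j → T i j = 0)
    (hdent : ∀ i : Fin n, ∃ μ : ℂ, 0 ≤ μ.im ∧ T i i = toQ μ)
    (q : ℍ[ℝ]) (lq : ℂ) (him : 0 ≤ lq.im) (hsim : qSimilar q (toQ lq)) :
    gm T q = Set.ncard {i : Fin n | T i i = toQ lq} := by
  classical
  set S : Set (Fin n) := {i : Fin n | T i i = toQ lq} with hS
  set v : S → (Fin n → ℍ[ℝ]) := fun i => Pi.single i.val 1 with hv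
  have hmv : ∀ (x : Fin n → ℍ[ℝ]) (i : Fin n), T.mulVec x i = T i i * x i := by
    intro x i
    rw [Matrix.mulVec, dotProduct]
    exact Finset.sum_eq_single i (fun k _ hk => by rw [hdiag i k (Ne.symm hk), zero_mul])
      (by simp)
  have hspan : Vclass T q = Submodule.span ℍ[ℝ]ᵐᵒᵖ (Set.range v) := by
    apply le_antisymm
    · rw [Vclass, Submodule.span_le]
      intro x hx
      simp only [Set.mem_iUnion, Set.mem_setOf_eq] at hx
      obtain ⟨q', hq', hxq⟩ := hx
      have hcoord : ∀ i : Fin n, x i ≠ 0 → i ∈ S := by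
        intro i hxi
        have h1 : T i i * x i = x i * q' := by
          rw [← hmv x i, show T.mulVec x = fun j => x j * q' from hxq]
        have h2 : T i i = (x i)⁻¹⁻¹ * q' * (x i)⁻¹ := by
          rw [inv_inv]
          rw [eq_mul_inv_iff_mul_eq₀ hxi]
          exact h1
        have hTsim : qSimilar (T i i) q' := ⟨(x i)⁻¹, inv_ne_zero hxi, h2⟩
        obtain ⟨μ, hμim, hμ⟩ := hdent i
        have : qSimilar (toQ μ) (toQ lq) :=
          qSimilar_trans (hμ ▸ hTsim) (qSimilar_trans hq' hsim)
        have := toQ_eq_of_qSimilar hμim him this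
        simpa [hS, hμ, this] using rfl
      have hx : x = ∑ i : Fin n, Pi.single i (x i) := (Finset.univ_sum_single x).symm
      rw [hx]
      apply Submodule.sum_mem
      intro i _
      by_cases hxi : x i = 0
      · rw [hxi]; simp
      · have : Pi.single i (x i) = (MulOpposite.op (x i)) • (Pi.single i (1 : ℍ[ℝ]) : Fin n → ℍ[ℝ]) := by
          funext j
          simp only [Pi.smul_apply, op_smul_apply, MulOpposite.unop_op]
          by_cases hj : j = i
          · subst hj; simp
          · simp [Pi.single_eq_of_ne hj]
        rw [this]
        exact Submodule.smul_mem _ _ (Submodule.subset_span ⟨⟨i, hcoord i hxi⟩, rfl⟩)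
    · rw [Vclass]
      apply Submodule.span_mono
      rintro _ ⟨⟨i, hi⟩, rfl⟩
      simp only [Set.mem_iUnion, Set.mem_setOf_eq]
      refine ⟨toQ lq, qSimilar_symm hsim, ?_⟩
      show T.mulVec (Pi.single i 1) = fun j => (Pi.single i (1:ℍ[ℝ]) : Fin n → ℍ[ℝ]) j * toQ lq
      funext j
      rw [hmv]
      by_cases hj : j = i
      · subst hj; simpa [hS] using hi
      · simp [Pi.single_eq_of_ne hj]
  have hli : LinearIndependent ℍ[ℝ]ᵐᵒᵖ v := by
    rw [Fintype.linearIndependent_iff]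
    intro g hg i₀
    have := congrFun hg i₀.val
    simp only [Finset.sum_apply, Pi.smul_apply, Pi.zero_apply, op_smul_apply] at this
    rw [Finset.sum_eq_single i₀ (fun k _ hk => by
        show (Pi.single (k : Fin n) (1:ℍ[ℝ]) : Fin n → ℍ[ℝ]) i₀.val * (g k).unop = 0
        rw [Pi.single_eq_of_ne (show (i₀ : Fin n) ≠ (k : Fin n) from
          fun h => hk (Subtype.val_injective h).symm), zero_mul])
      (by simp)] at this
    simp only [hv, Pi.single_eq_same, one_mul] at this
    exact MulOpposite.unop_injective this
  rw [gm, hspan, finrank_span_eq_card hli]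
  rw [← Nat.card_coe_set_eq, Nat.card_eq_fintype_card]

lemma sandwich_mul {n : ℕ} (A B U : Matrix (Fin n) (Fin n) ℍ[ℝ]) (h2 : U * Uᴴ = 1) :
    (Uᴴ * A * U) * (Uᴴ * B * U) = Uᴴ * (A * B) * U := by
  rw [show Uᴴ * A * U * (Uᴴ * B * U) = Uᴴ * A * (U * Uᴴ) * (B * U) by
    simp only [Matrix.mul_assoc], h2, Matrix.mul_one]
  simp only [Matrix.mul_assoc]

/-- For a normal quaternion matrix, algebraic and geometric multiplicities of every
right eigenvalue coincide. -/
theorem normal_am_eq_gm {n : ℕ} (A : Matrix (Fin n) (Fin n) ℍ[ℝ])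
    (hA : A * Aᴴ = Aᴴ * A) (q : ℍ[ℝ]) (hq : RightEig A q)
    (lq : ℂ) (him : 0 ≤ lq.im) (hsim : qSimilar q (toQ lq)) :
    ∀ U T : Matrix (Fin n) (Fin n) ℍ[ℝ],
      Uᴴ * U = 1 → U * Uᴴ = 1 → T = Uᴴ * A * U →
      (∀ i j : Fin n, j < i → T i j = 0) →
      (∀ i : Fin n, ∃ μ : ℂ, 0 ≤ μ.im ∧ T i i = toQ μ) →
      Set.ncard {i : Fin n | T i i = toQ lq} = gm A q := by
  intro U T h1 h2 hT htri hdent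
  have hTH : Tᴴ = Uᴴ * Aᴴ * U := by
    rw [hT]
    simp only [Matrix.conjTranspose_mul, Matrix.conjTranspose_conjTranspose, Matrix.mul_assoc]
  have hTnorm : T * Tᴴ = Tᴴ * T := by
    rw [hTH, hT, sandwich_mul A Aᴴ U h2, sandwich_mul Aᴴ A U h2, hA]
  have hdiag := tri_normal_diag T hTnorm htri
  have htrans := gm_transfer A U h1 h2 q
  rw [← hT] at htrans
  rw [htrans]
  exact (gm_diag T hdiag hdent q lq him hsim).symm
end
end
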